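/- For every integer d ≥ 1 there exists a constant C > 0 such that for every real R > 1 there exists a finite set U of unit vectors in ℝ^d with cardinality at most C·R^((d-1)/2) and such that {x ∈ ℝ^d : ‖x‖ ≥ R} ⊆ ⋃_{v ∈ U} {x ∈ ℝ^d : ⟨x, v⟩ ≥ R − 1}. -/

import Mathlib

open EuclideanSpace Metric MeasureTheory Set

lemma packing_bound (d : ℕ) (hd : 1 ≤ d) (ε : ℝ) (hε : 0 < ε) (hε2 : ε < 2)
    (U : Finset (EuclideanSpace ℝ (Fin d)))
    (hU : ∀ v ∈ U, ‖v‖ = 1)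
    (hsep : ∀ u ∈ U, ∀ v ∈ U, u ≠ v → ε ≤ dist u v) :
    (U.card : ℝ) * (ε / 2) ^ d ≤ (d : ℝ) * 2 ^ d * (ε / 2) := by
  set t := ε / 2 with ht
  have ht0 : 0 < t := by positivity
  have ht1 : t < 1 := by simp only [ht]; linarith
  have hfr : Module.finrank ℝ (EuclideanSpace ℝ (Fin d)) = d := finrank_euclideanSpace_fin
  set μ : Measure (EuclideanSpace ℝ (Fin d)) := volume with hμ
  -- disjointness of balls
  have hdisj : (U : Set (EuclideanSpace ℝ (Fin d))).PairwiseDisjoint (fun v => ball v t) := by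
    intro u hu v hv huv
    exact ball_disjoint_ball (by linarith [hsep u hu v hv huv])
  have hsum : μ (⋃ v ∈ U, ball v t) = ∑ v ∈ U, μ (ball v t) :=
    measure_biUnion_finset hdisj (fun v _ => measurableSet_ball)
  have hball : ∀ v : EuclideanSpace ℝ (Fin d), μ (ball v t) = ENNReal.ofReal (t ^ d) * μ (ball 0 1) := by
    intro v; rw [Measure.addHaar_ball_of_pos μ v ht0, hfr]
  -- union is inside big ball, disjoint from small closed ball
  have hsub : (⋃ v ∈ U, ball v t) ⊆ ball (0 : EuclideanSpace ℝ (Fin d)) (1 + t) := by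
    intro y hy
    simp only [mem_iUnion, exists_prop] at hy
    obtain ⟨v, hv, hyv⟩ := hy
    have h1 : dist v 0 = 1 := by simpa [dist_eq_norm] using hU v hv
    have := mem_ball.mp hyv
    have : dist y 0 < 1 + t := by
      calc dist y 0 ≤ dist y v + dist v 0 := dist_triangle _ _ _
      _ < t + 1 := by linarith
      _ = 1 + t := by ring
    exact mem_ball.mpr this
  have hdisj2 : Disjoint (⋃ v ∈ U, ball v t) (closedBall (0 : EuclideanSpace ℝ (Fin d)) (1 - t)) := by
    rw [Set.disjoint_left]
    intro y hy hy2
    simp only [mem_iUnion, exists_prop] at hy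
    obtain ⟨v, hv, hyv⟩ := hy
    have h1 : dist v 0 = 1 := by simpa [dist_eq_norm] using hU v hv
    have h2 := mem_ball.mp hyv
    have h3 := mem_closedBall.mp hy2
    have : dist v 0 ≤ dist v y + dist y 0 := dist_triangle _ _ _
    rw [dist_comm v y] at this
    linarith
  have hmeas : μ (⋃ v ∈ U, ball v t) + μ (closedBall (0 : EuclideanSpace ℝ (Fin d)) (1 - t)) ≤
      μ (ball (0 : EuclideanSpace ℝ (Fin d)) (1 + t)) := by
    rw [← measure_union hdisj2 measurableSet_closedBall]
    refine measure_mono (Set.union_subset hsub (closedBall_subset_ball ?_))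
    linarith
  rw [hsum] at hmeas
  simp only [hball, Finset.sum_const, nsmul_eq_mul] at hmeas
  rw [Measure.addHaar_ball_of_pos μ _ (by linarith : (0:ℝ) < 1 + t), hfr,
    Measure.addHaar_closedBall μ _ (by linarith : (0:ℝ) ≤ 1 - t), hfr] at hmeas
  have hB0 : μ (ball (0 : EuclideanSpace ℝ (Fin d)) 1) ≠ 0 := (measure_ball_pos μ _ one_pos).ne'
  have hBt : μ (ball (0 : EuclideanSpace ℝ (Fin d)) 1) ≠ ⊤ := measure_ball_lt_top.ne
  have key : (U.card : ℝ) * t ^ d + (1 - t) ^ d ≤ (1 + t) ^ d := by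
    have h1 : ENNReal.ofReal ((U.card : ℝ) * t ^ d + (1 - t) ^ d) * μ (ball (0 : EuclideanSpace ℝ (Fin d)) 1) ≤
        ENNReal.ofReal ((1 + t) ^ d) * μ (ball (0 : EuclideanSpace ℝ (Fin d)) 1) := by
      rw [ENNReal.ofReal_add (by positivity) (pow_nonneg (by linarith) d), ENNReal.ofReal_mul (by positivity),
        ENNReal.ofReal_natCast, add_mul, mul_assoc]
      exact hmeas
    have h2 := (ENNReal.mul_le_mul_iff_left hB0 hBt).mp h1
    rwa [ENNReal.ofReal_le_ofReal_iff (by positivity)] at h2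
  -- now the binomial-type bound
  have hgeom : (1 + t) ^ d - (1 - t) ^ d ≤ (d : ℝ) * 2 ^ (d - 1) * (2 * t) := by
    rw [← geom_sum₂_mul (1 + t) (1 - t) d]
    have hxy : (1 + t) - (1 - t) = 2 * t := by ring
    rw [hxy]
    have hbound : ∑ i ∈ Finset.range d, (1 + t) ^ i * (1 - t) ^ (d - 1 - i) ≤
        (d : ℝ) * 2 ^ (d - 1) := by
      calc ∑ i ∈ Finset.range d, (1 + t) ^ i * (1 - t) ^ (d - 1 - i)
          ≤ ∑ _i ∈ Finset.range d, (2 : ℝ) ^ (d - 1) := by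
            refine Finset.sum_le_sum fun i hi => ?_
            have hi' := Finset.mem_range.mp hi
            have h1 : (1 + t) ^ i ≤ 2 ^ (d - 1) := by
              calc (1 + t) ^ i ≤ 2 ^ i := pow_le_pow_left₀ (by linarith) (by linarith) i
              _ ≤ 2 ^ (d - 1) := pow_le_pow_right₀ (by norm_num) (by omega)
            have h2 : (1 - t) ^ (d - 1 - i) ≤ 1 :=
              pow_le_one₀ (by linarith) (by linarith)
            calc (1 + t) ^ i * (1 - t) ^ (d - 1 - i) ≤ (1 + t) ^ i * 1 := by
                  exact mul_le_mul_of_nonneg_left h2 (by positivity)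
            _ = (1 + t) ^ i := mul_one _
            _ ≤ 2 ^ (d - 1) := h1
      _ = (d : ℝ) * 2 ^ (d - 1) := by
            rw [Finset.sum_const, Finset.card_range, nsmul_eq_mul]
    exact mul_le_mul_of_nonneg_right hbound (by linarith)
  have h2d : ((d : ℝ)) * 2 ^ (d - 1) * (2 * t) = (d : ℝ) * 2 ^ d * t := by
    have h : (2 : ℝ) ^ d = 2 ^ (d - 1) * 2 := by
      rw [← pow_succ]
      congr 1
      omega
    rw [h]; ring
  linarith

theorem sphere_cap_covering (d : ℕ) (hd : 1 ≤ d) :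
    ∃ C : ℝ, 0 < C ∧ ∀ R : ℝ, 1 < R →
      ∃ U : Finset (EuclideanSpace ℝ (Fin d)),
        (∀ v ∈ U, ‖v‖ = 1) ∧
        (U.card : ℝ) ≤ C * R ^ (((d : ℝ) - 1) / 2) ∧
        {x : EuclideanSpace ℝ (Fin d) | R ≤ ‖x‖} ⊆
          ⋃ v ∈ U, {x : EuclideanSpace ℝ (Fin d) | R - 1 ≤ inner ℝ x v} := by
  classical
  set C : ℝ := (d : ℝ) * 2 ^ (2 * d) with hC
  have hC0 : 0 < C := by
    have : (1 : ℝ) ≤ (d : ℝ) := by exact_mod_cast hd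
    positivity
  refine ⟨C, hC0, fun R hR => ?_⟩
  have hR0 : (0 : ℝ) < R := by linarith
  set ε : ℝ := Real.sqrt (2 / R) with hεdef
  have hε0 : 0 < ε := Real.sqrt_pos.mpr (by positivity)
  have hεsq : ε ^ 2 = 2 / R := Real.sq_sqrt (by positivity)
  have hR1 : 1 / R ≤ 1 := by
    rw [div_le_one hR0]; linarith
  have hε2 : ε < 2 := by
    have h2R : 2 / R < 2 := by
      rw [div_lt_iff₀ hR0]; nlinarith
    nlinarith [hεsq, hε0.le, h2R]
  set t : ℝ := ε / 2 with htdef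
  have ht0 : 0 < t := by positivity
  set e : ℕ := d - 1 with he
  have hde : d = e + 1 := by omega
  have heR : (e : ℝ) = (d : ℝ) - 1 := by
    rw [he, Nat.cast_sub hd, Nat.cast_one]
  have hRpow0 : (0 : ℝ) ≤ R ^ (((d : ℝ) - 1) / 2) := Real.rpow_nonneg hR0.le _
  -- card bound for any separated subset of the sphere
  have cardbound : ∀ U : Finset (EuclideanSpace ℝ (Fin d)),
      (∀ v ∈ U, ‖v‖ = 1) → (∀ u ∈ U, ∀ v ∈ U, u ≠ v → ε ≤ dist u v) →
      (U.card : ℝ) ≤ C * R ^ (((d : ℝ) - 1) / 2) := by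
    intro U hU hsep
    have hpack := packing_bound d hd ε hε0 hε2 U hU hsep
    rw [← htdef] at hpack
    have htd : t ^ d = t ^ e * t := by rw [hde, pow_succ]
    rw [htd, ← mul_assoc] at hpack
    have h1 : (U.card : ℝ) * t ^ e ≤ (d : ℝ) * 2 ^ d :=
      le_of_mul_le_mul_right hpack ht0
    set s : ℝ := 2 / ε with hs
    have hs0 : 0 < s := by positivity
    have hts : t * s = 1 := by
      rw [htdef, hs]; field_simp
    have hcard : (U.card : ℝ) ≤ (d : ℝ) * 2 ^ d * s ^ e := by
      have h2 : (U.card : ℝ) * t ^ e * s ^ e ≤ (d : ℝ) * 2 ^ d * s ^ e :=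
        mul_le_mul_of_nonneg_right h1 (by positivity)
      have h3 : t ^ e * s ^ e = 1 := by
        rw [← mul_pow, hts, one_pow]
      rwa [mul_assoc, h3, mul_one] at h2
    have hssq : s ^ 2 = 2 * R := by
      rw [hs, div_pow, hεsq]
      field_simp
    have hseq : s = Real.sqrt (2 * R) := by
      rw [← hssq, Real.sqrt_sq hs0.le]
    have hspow : s ^ e = (2 * R) ^ ((e : ℝ) / 2) := by
      rw [hseq, Real.sqrt_eq_rpow, ← Real.rpow_natCast (((2:ℝ)*R) ^ ((1:ℝ)/2)) e,
        ← Real.rpow_mul (by positivity)]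
      ring_nf
    have hsplit : (2 * R : ℝ) ^ ((e : ℝ) / 2) =
        (2 : ℝ) ^ ((e : ℝ) / 2) * R ^ ((e : ℝ) / 2) :=
      Real.mul_rpow (by norm_num) hR0.le
    have h2e : (2 : ℝ) ^ ((e : ℝ) / 2) ≤ 2 ^ (d : ℝ) := by
      apply Real.rpow_le_rpow_of_exponent_le (by norm_num)
      have : (e : ℝ) ≤ (d : ℝ) := by exact_mod_cast Nat.sub_le d 1
      linarith
    have h2d : (2 : ℝ) ^ (d : ℝ) = 2 ^ d := by
      rw [Real.rpow_natCast]
    calc (U.card : ℝ) ≤ (d : ℝ) * 2 ^ d * s ^ e := hcard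
      _ = (d : ℝ) * 2 ^ d * ((2 : ℝ) ^ ((e : ℝ) / 2) * R ^ ((e : ℝ) / 2)) := by
          rw [hspow, hsplit]
      _ ≤ (d : ℝ) * 2 ^ d * ((2 : ℝ) ^ d * R ^ ((e : ℝ) / 2)) := by
          apply mul_le_mul_of_nonneg_left _ (by positivity)
          apply mul_le_mul_of_nonneg_right _ (Real.rpow_nonneg hR0.le _)
          rw [← h2d]; exact h2e
      _ = C * R ^ (((d : ℝ) - 1) / 2) := by
          rw [heR, hC, two_mul, pow_add]
          ring
  -- maximal separated set
  set P : ℕ → Prop := fun n => ∃ U : Finset (EuclideanSpace ℝ (Fin d)),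
    (∀ v ∈ U, ‖v‖ = 1) ∧ (∀ u ∈ U, ∀ v ∈ U, u ≠ v → ε ≤ dist u v) ∧ U.card = n with hP
  set N : ℕ := ⌈C * R ^ (((d : ℝ) - 1) / 2)⌉₊ with hN
  have hP0 : P 0 := ⟨∅, by simp, by simp, rfl⟩
  have hPbound : ∀ n, P n → n ≤ N := by
    rintro n ⟨U, hU1, hU2, hU3⟩
    have h := cardbound U hU1 hU2
    rw [hU3] at h
    have h2 : (n : ℝ) ≤ (N : ℝ) := h.trans (Nat.le_ceil _)
    exact_mod_cast h2
  set M : ℕ := Nat.findGreatest P N with hM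
  obtain ⟨U, hU1, hU2, hU3⟩ : P M := Nat.findGreatest_spec (Nat.zero_le N) hP0
  have hcover : ∀ u : EuclideanSpace ℝ (Fin d), ‖u‖ = 1 → ∃ v ∈ U, dist u v ≤ ε := by
    intro u hu
    by_contra hcon
    push_neg at hcon
    have hunotin : u ∉ U := fun h => absurd (hcon u h) (by simp [hε0.le])
    have hP1 : P (M + 1) := by
      refine ⟨insert u U, ?_, ?_, ?_⟩
      · intro v hv
        rcases Finset.mem_insert.mp hv with rfl | hv
        · exact hu
        · exact hU1 v hv
      · intro a ha b hb hab
        rcases Finset.mem_insert.mp ha with ha' | ha'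
        · rcases Finset.mem_insert.mp hb with hb' | hb'
          · exact absurd (ha'.trans hb'.symm) hab
          · rw [ha']; exact (hcon b hb').le
        · rcases Finset.mem_insert.mp hb with hb' | hb'
          · rw [hb', dist_comm]; exact (hcon a ha').le
          · exact hU2 a ha' b hb' hab
      · rw [Finset.card_insert_of_notMem hunotin, hU3]
    have := Nat.le_findGreatest (hPbound _ hP1) hP1
    omega
  refine ⟨U, hU1, hU3 ▸ cardbound U hU1 hU2, ?_⟩
  intro x hx
  simp only [Set.mem_setOf_eq] at hx
  have hx0 : 0 < ‖x‖ := by linarith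
  set u : EuclideanSpace ℝ (Fin d) := ‖x‖⁻¹ • x with hu
  have hu1 : ‖u‖ = 1 := by
    rw [hu, norm_smul, norm_inv, norm_norm, inv_mul_cancel₀ hx0.ne']
  obtain ⟨v, hv, hduv⟩ := hcover u hu1
  have hinneruv : (1 : ℝ) - 1 / R ≤ inner ℝ u v := by
    have hsq : ‖u - v‖ ^ 2 ≤ ε ^ 2 := by
      have : ‖u - v‖ ≤ ε := by rwa [← dist_eq_norm]
      nlinarith [norm_nonneg (u - v)]
    have hexp : ‖u - v‖ ^ 2 = ‖u‖ ^ 2 - 2 * inner ℝ u v + ‖v‖ ^ 2 :=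
      norm_sub_sq_real u v
    rw [hu1, hU1 v hv, hεsq] at *
    have h2R : 2 / R ≤ 2 * (1 / R) := by rw [mul_one_div]
    nlinarith
  have hinner0 : (0 : ℝ) ≤ inner ℝ u v := by linarith
  have hxu : x = ‖x‖ • u := by
    rw [hu, smul_smul, mul_inv_cancel₀ hx0.ne', one_smul]
  have hinnerx : (inner ℝ x v : ℝ) = ‖x‖ * inner ℝ u v := by
    conv_lhs => rw [hxu]
    exact real_inner_smul_left u v ‖x‖
  have hfinal : R - 1 ≤ (inner ℝ x v : ℝ) := by
    rw [hinnerx]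
    calc R - 1 = R * (1 - 1 / R) := by field_simp
      _ ≤ ‖x‖ * inner ℝ u v :=
        mul_le_mul hx hinneruv (by linarith) hx0.le
  simp only [Set.mem_iUnion, Set.mem_setOf_eq]
  exact ⟨v, hv, hfinal⟩
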